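/- arXiv:2301.02085 — 3 statements merged into one kernel-verified Lean document; each statement's English description precedes it below -/
import Mathlib

section
/- Let p and q be coprime integers with 0 < q < p. Then ‖q/p‖ = ‖(p−q)/p‖; that is, the sum of the coefficients of the continued fraction expansion of q/p (produced by the floor algorithm) equals the sum of the coefficients of the continued fraction expansion of (p−q)/p. -/
/-- The sum of the successive quotients arising in the Euclidean algorithm applied
to the pair `(a, b)`; for a rational `a / b` these quotients are exactly the
coefficients of its continued fraction expansion produced by the floor algorithm. -/
def euclidQuotSum : ℕ → ℕ → ℕ
  | _, 0 => 0
  | a, (b + 1) => a / (b + 1) + euclidQuotSum (b + 1) (a % (b + 1))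
termination_by a b => b
decreasing_by exact Nat.mod_lt _ (Nat.succ_pos b)

/-- `‖x‖`: the sum of the coefficients of the continued fraction expansion
(produced by the floor algorithm) of the positive rational `x`, i.e. the sum of
the successive quotients of the Euclidean algorithm applied to its numerator
and denominator. -/
def cfCoeffSum (x : ℚ) : ℕ := euclidQuotSum x.num.natAbs x.den

lemma euclidQuotSum_pos (a b : ℕ) (hb : 0 < b) :
    euclidQuotSum a b = a / b + euclidQuotSum b (a % b) := by
  cases b with
  | zero => omega
  | succ n => rw [euclidQuotSum]

lemma aux_half (p q : ℕ) (h1 : 0 < q) (h2 : 2 * q < p) :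
    euclidQuotSum p q = euclidQuotSum p (p - q) := by
  set a := p / q with ha
  set s := p % q with hs
  have hmod := Nat.div_add_mod p q
  have hslt : s < q := Nat.mod_lt _ h1
  have ha2 : 2 ≤ a := by
    rw [ha, Nat.le_div_iff_mul_le h1]; omega
  have hr : 0 < p - q := by omega
  have hm : a * q + s = p := by rw [mul_comm]; exact hmod
  have hrep : p - q = (a - 1) * q + s := by
    rw [Nat.sub_one_mul]; omega
  have hdiv : (p - q) / q = a - 1 := by
    rw [hrep, add_comm, Nat.add_mul_div_right _ _ h1, Nat.div_eq_of_lt hslt]; omega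
  have hmod2 : (p - q) % q = s := by
    rw [hrep, add_comm, Nat.add_mul_mod_self_right, Nat.mod_eq_of_lt hslt]
  have hpr1 : p / (p - q) = 1 := by
    apply Nat.div_eq_of_lt_le <;> omega
  have hpr2 : p % (p - q) = q := by
    have := Nat.div_add_mod p (p - q)
    rw [hpr1] at this; omega
  rw [euclidQuotSum_pos p q h1, euclidQuotSum_pos p (p - q) hr, hpr1, hpr2,
    euclidQuotSum_pos (p - q) q h1, hdiv, hmod2, ← hs]
  omega

lemma aux_main (p q : ℕ) (h1 : 0 < q) (h2 : q < p) :
    euclidQuotSum p q = euclidQuotSum p (p - q) := by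
  rcases lt_trichotomy (2 * q) p with h | h | h
  · exact aux_half p q h1 h
  · have : p - q = q := by omega
    rw [this]
  · have h3 : 0 < p - q := by omega
    have h4 : 2 * (p - q) < p := by omega
    have := aux_half p (p - q) h3 h4
    have h5 : p - (p - q) = q := by omega
    rw [h5] at this
    exact this.symm

theorem cfCoeffSum_sub_eq (p q : ℤ) (hcop : IsCoprime p q)
    (hq : 0 < q) (hqp : q < p) :
    cfCoeffSum ((q : ℚ) / (p : ℚ)) = cfCoeffSum (((p : ℚ) - (q : ℚ)) / (p : ℚ)) := by
  have hp : (0 : ℤ) < p := hq.trans hqp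
  have hcop1 : Nat.Coprime q.natAbs p.natAbs := by
    rw [Nat.coprime_comm, ← Int.isCoprime_iff_nat_coprime]; exact hcop
  have hcop2 : Nat.Coprime (p - q).natAbs p.natAbs := by
    rw [Nat.coprime_comm, ← Int.isCoprime_iff_nat_coprime]
    have := (hcop.neg_right.add_mul_left_right 1)
    simpa [sub_eq_neg_add] using this
  have hsub : ((p : ℚ) - (q : ℚ)) = ((p - q : ℤ) : ℚ) := by push_cast; ring
  have hn1 := Rat.num_div_eq_of_coprime hp hcop1
  have hd1 := Rat.den_div_eq_of_coprime hp hcop1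
  have hn2 := Rat.num_div_eq_of_coprime hp hcop2
  have hd2 := Rat.den_div_eq_of_coprime hp hcop2
  rw [cfCoeffSum, cfCoeffSum, hsub, hn1, hn2]
  have hd1' : ((q : ℚ) / (p : ℚ)).den = p.natAbs := by
    have := hd1; omega
  have hd2' : (((p - q : ℤ) : ℚ) / (p : ℚ)).den = p.natAbs := by
    have := hd2; omega
  rw [hd1', hd2']
  have hq' : q.natAbs < p.natAbs := by omega
  have hpq : (p - q).natAbs = p.natAbs - q.natAbs := by omega
  rw [hpq]
  -- reduce to the nat lemma via one unfolding step
  have h0 : 0 < q.natAbs := by omega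
  have hr0 : 0 < p.natAbs - q.natAbs := by omega
  rw [euclidQuotSum_pos _ _ (by omega : 0 < p.natAbs),
      euclidQuotSum_pos _ _ (by omega : 0 < p.natAbs),
      Nat.div_eq_of_lt hq', Nat.div_eq_of_lt (by omega),
      Nat.mod_eq_of_lt hq', Nat.mod_eq_of_lt (by omega)]
  exact (aux_main p.natAbs q.natAbs h0 hq').symm ▸ rfl
end

section
/- Fix natural numbers g, n, b with b ≥ 1, an integer e, and for each i = 1, …, n integers p_i ≥ 1 and q_i. Let G be the group with generators x_1, y_1, …, x_g, y_g, c_1, …, c_n, d_1, …, d_b, h and relators: h commutes with every generator; c_i^{p_i} h^{q_i} = 1 for each i = 1, …, n; and [x_1, y_1]⋯[x_g, y_g] · c_1⋯c_n · d_1⋯d_b · h^e = 1. Then there exists a surjective group homomorphism from G onto the free abelian group ℤ^{2g+b}. (This is the algebraic content of the lower bound lemma: the fundamental group of a Seifert fibered space over an orientable base surface Σ of genus g with b ≥ 1 boundary components has abelianization with a free summand of rank 2g + b = |2 − χ(Σ)|.) -/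
/-- A prime power dividing a finite lcm of nonzero naturals divides one of them. -/
lemma pow_dvd_finset_lcm {ι : Type*} [DecidableEq ι] (s : Finset ι) (f : ι → ℕ)
    (hf : ∀ i ∈ s, f i ≠ 0) {ℓ k : ℕ} (hℓ : ℓ.Prime) (hk : k ≠ 0)
    (h : ℓ ^ k ∣ s.lcm f) : ∃ i ∈ s, ℓ ^ k ∣ f i := by
  induction s using Finset.induction with
  | empty =>
    rw [Finset.lcm_empty] at h
    have := Nat.eq_one_of_dvd_one h
    rw [pow_eq_one_iff, or_iff_left hk] at this
    exact absurd this hℓ.ne_one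
  | @insert a s ha ih =>
    rw [Finset.lcm_insert] at h
    have hfa : f a ≠ 0 := hf a (Finset.mem_insert_self a s)
    have hls : s.lcm f ≠ 0 := by
      simp only [ne_eq, Finset.lcm_eq_zero_iff]
      rintro ⟨i, hi, h0⟩
      exact hf i (Finset.mem_insert_of_mem hi) h0
    have hlcm : lcm (f a) (s.lcm f) ≠ 0 := by
      simp [lcm_eq_zero_iff, hfa, hls]
    rw [Nat.Prime.pow_dvd_iff_le_factorization hℓ hlcm] at h
    have : (Nat.lcm (f a) (s.lcm f)).factorization = (f a).factorization ⊔ (s.lcm f).factorization :=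
      Nat.factorization_lcm hfa hls
    rw [show lcm (f a) (s.lcm f) = Nat.lcm (f a) (s.lcm f) from rfl, this] at h
    simp only [Finsupp.sup_apply, le_sup_iff] at h
    rcases h with h | h
    · exact ⟨a, Finset.mem_insert_self a s,
        (Nat.Prime.pow_dvd_iff_le_factorization hℓ hfa).2 h⟩
    · obtain ⟨i, hi, hd⟩ := ih (fun i hi => hf i (Finset.mem_insert_of_mem hi))
        ((Nat.Prime.pow_dvd_iff_le_factorization hℓ hls).2 h)
      exact ⟨i, Finset.mem_insert_of_mem hi, hd⟩

lemma sfs_exists_t_a (n : ℕ) (p q : Fin n → ℤ) (hp : ∀ i, 1 ≤ p i) :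
    ∃ (t : ℤ) (a : Fin n → ℤ), (∀ i, p i * a i + q i * t = 0) ∧
      AddSubgroup.closure ({t} ∪ Set.range a) = ⊤ := by
  classical
  set G : Fin n → ℕ := fun i => Int.gcd (p i) (q i) with hG
  set P' : Fin n → ℕ := fun i => (p i).natAbs / G i with hP'
  set T : ℕ := Finset.univ.lcm P' with hT
  have hGpos : ∀ i, 0 < G i := fun i =>
    Nat.pos_of_ne_zero fun h => by
      have h2 := Int.gcd_eq_zero_iff.1 h
      have := hp i; omega
  have hGdp : ∀ i, (G i : ℤ) ∣ p i := fun i => Int.gcd_dvd_left _ _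
  have hGdq : ∀ i, (G i : ℤ) ∣ q i := fun i => Int.gcd_dvd_right _ _
  have hpfac : ∀ i, p i = (G i : ℤ) * (P' i : ℤ) := by
    intro i
    have h1 : (p i).natAbs = G i * P' i := (Nat.mul_div_cancel'
      (Nat.gcd_dvd_left (p i).natAbs (q i).natAbs)).symm
    have h2 : p i = ((p i).natAbs : ℤ) := by have := hp i; omega
    rw [h2, h1]; push_cast; ring
  have hP'pos : ∀ i, P' i ≠ 0 := by
    intro i h
    have := hpfac i
    rw [h] at this
    simp at this
    have := hp i; omega
  have hTne : T ≠ 0 := by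
    rw [hT]
    simp only [ne_eq, Finset.lcm_eq_zero_iff]
    rintro ⟨i, _, h0⟩
    exact hP'pos i h0
  have hP'T : ∀ i, (P' i : ℤ) ∣ (T : ℤ) := fun i =>
    Int.natCast_dvd_natCast.2 (Finset.dvd_lcm (Finset.mem_univ i))
  set t : ℤ := (T : ℤ) with ht
  set a : Fin n → ℤ := fun i => -((q i / (G i : ℤ)) * (t / (P' i : ℤ))) with ha
  refine ⟨t, a, ?_, ?_⟩
  · intro i
    have e1 : (G i : ℤ) * (q i / (G i : ℤ)) = q i := Int.mul_ediv_cancel' (hGdq i)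
    have e2 : (P' i : ℤ) * (t / (P' i : ℤ)) = t := Int.mul_ediv_cancel' (hP'T i)
    have : p i * a i = -(q i * t) := by
      rw [ha, hpfac i]
      calc (G i : ℤ) * (P' i : ℤ) * -((q i / (G i : ℤ)) * (t / (P' i : ℤ)))
          = -(((G i : ℤ) * (q i / (G i : ℤ))) * ((P' i : ℤ) * (t / (P' i : ℤ)))) := by ring
        _ = -(q i * t) := by rw [e1, e2]
    rw [this]; ring
  · -- the gcd of t and all the a i is 1, so the closure is everything
    have key : ∀ m : ℤ, m ∣ t → (∀ i, m ∣ a i) → IsUnit m := by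
      intro m hmt hma
      by_contra hunit
      have hm1 : m.natAbs ≠ 1 := fun h => hunit (Int.isUnit_iff_natAbs_eq.2 h)
      obtain ⟨ℓz, hℓz, hℓzm⟩ := Int.exists_prime_and_dvd hm1
      set ℓ : ℕ := ℓz.natAbs with hℓdef
      have hℓ : ℓ.Prime := Int.prime_iff_natAbs_prime.1 hℓz
      have hℓT : ℓ ∣ T := by
        have : ℓz ∣ t := hℓzm.trans hmt
        rwa [ht, ← Int.natAbs_dvd_natAbs, Int.natAbs_natCast] at this
      set k : ℕ := T.factorization ℓ with hk
      have hkpos : k ≠ 0 := (hℓ.factorization_pos_of_dvd hTne hℓT).ne'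
      have hkd : ℓ ^ k ∣ T := Nat.ordProj_dvd T ℓ
      obtain ⟨j, _, hj⟩ := pow_dvd_finset_lcm Finset.univ P'
        (fun i _ => hP'pos i) hℓ hkpos hkd
      -- ℓ divides a j, but divides neither factor: contradiction
      have hℓaj : ℓz ∣ a j := hℓzm.trans (hma j)
      have hℓP'j : ℓ ∣ P' j := (dvd_pow_self ℓ hkpos).trans hj
      -- ℓ does not divide q j / G j
      have hcop : Nat.Coprime (P' j) ((q j).natAbs / G j) :=
        Nat.coprime_div_gcd_div_gcd (hGpos j)
      have hq'abs : (q j / (G j : ℤ)).natAbs = (q j).natAbs / G j := by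
        rw [Int.natAbs_ediv_of_dvd (hGdq j), Int.natAbs_natCast]
      have hnd1 : ¬ ℓz ∣ (q j / (G j : ℤ)) := by
        intro hd
        rw [← Int.natAbs_dvd_natAbs, hq'abs] at hd
        have : ℓ ∣ Nat.gcd (P' j) ((q j).natAbs / G j) := Nat.dvd_gcd hℓP'j hd
        rw [hcop] at this
        exact hℓ.ne_one (Nat.eq_one_of_dvd_one this)
      -- ℓ does not divide T / P' j
      have hnd2 : ¬ ℓz ∣ (t / (P' j : ℤ)) := by
        intro hd
        have hnatj : P' j * (T / P' j) = T := Nat.mul_div_cancel' (Finset.dvd_lcm (Finset.mem_univ j))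
        have hTdiv : t / (P' j : ℤ) = ((T / P' j : ℕ) : ℤ) := by
          have hcast : (P' j : ℤ) * ((T / P' j : ℕ) : ℤ) = t := by rw [ht]; exact_mod_cast hnatj
          rw [← hcast, Int.mul_ediv_cancel_left _ (by exact_mod_cast hP'pos j)]
        rw [hTdiv, ← Int.natAbs_dvd_natAbs, Int.natAbs_natCast] at hd
        have : ℓ ^ (k + 1) ∣ T := by
          have : ℓ ^ k * ℓ ∣ P' j * (T / P' j) := mul_dvd_mul hj hd
          rwa [Nat.mul_div_cancel' (Finset.dvd_lcm (Finset.mem_univ j)), ← pow_succ] at this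
        exact Nat.pow_succ_factorization_not_dvd hTne hℓ this
      rw [ha] at hℓaj
      simp only [dvd_neg] at hℓaj
      rcases hℓz.dvd_mul.mp hℓaj with hd | hd
      · exact hnd1 hd
      · exact hnd2 hd
    obtain ⟨m, hm⟩ := Int.subgroup_cyclic (AddSubgroup.closure ({t} ∪ Set.range a))
    have hmem : ∀ x : ℤ, x ∈ AddSubgroup.closure ({t} ∪ Set.range a) ↔ m ∣ x := by
      intro x
      rw [hm, AddSubgroup.mem_closure_singleton]
      constructor
      · rintro ⟨z, rfl⟩; exact ⟨z, by rw [zsmul_eq_mul, mul_comm]; push_cast; ring⟩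
      · rintro ⟨z, rfl⟩; exact ⟨z, by rw [zsmul_eq_mul, mul_comm]; push_cast; ring⟩
    have hmt : m ∣ t := (hmem t).1 (AddSubgroup.subset_closure (Or.inl rfl))
    have hma : ∀ i, m ∣ a i := fun i =>
      (hmem (a i)).1 (AddSubgroup.subset_closure (Or.inr ⟨i, rfl⟩))
    have := key m hmt hma
    rw [eq_top_iff]
    intro x _
    rw [hmem]
    exact this.dvd


/-- Generators of the standard presentation of the fundamental group of a Seifert
fibered space over an orientable base of genus `g`, with `n` singular fibres and
`b` boundary components: `x₁, y₁, …, x_g, y_g, c₁, …, c_n, d₁, …, d_b, h`. -/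
inductive SFSGen (g n b : ℕ) : Type
  | x : Fin g → SFSGen g n b
  | y : Fin g → SFSGen g n b
  | c : Fin n → SFSGen g n b
  | d : Fin b → SFSGen g n b
  | h : SFSGen g n b

open FreeGroup
open scoped commutatorElement

/-- The relators: `h` commutes with every generator; `cᵢ^{pᵢ} h^{qᵢ} = 1`;
and `[x₁,y₁]⋯[x_g,y_g] · c₁⋯c_n · d₁⋯d_b · h^e = 1`. -/
def sfsRels (g n b : ℕ) (e : ℤ) (p q : Fin n → ℤ) :
    Set (FreeGroup (SFSGen g n b)) :=
  (Set.range fun a : SFSGen g n b => ⁅of (SFSGen.h : SFSGen g n b), of a⁆) ∪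
  (Set.range fun i : Fin n =>
      of (SFSGen.c i : SFSGen g n b) ^ p i * of (SFSGen.h : SFSGen g n b) ^ q i) ∪
  { (List.ofFn fun i : Fin g =>
        ⁅of (SFSGen.x i : SFSGen g n b), of (SFSGen.y i : SFSGen g n b)⁆).prod *
    (List.ofFn fun i : Fin n => of (SFSGen.c i : SFSGen g n b)).prod *
    (List.ofFn fun k : Fin b => of (SFSGen.d k : SFSGen g n b)).prod *
    of (SFSGen.h : SFSGen g n b) ^ e }

/-- The fundamental group of a Seifert fibered space over an orientable genus-`g`
base with `b ≥ 1` boundary components surjects onto the free abelian group of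
rank `2g + b`. -/
theorem sfs_pi1_surjects_onto_free_abelian
    (g n b : ℕ) (hb : 1 ≤ b) (e : ℤ) (p q : Fin n → ℤ) (hp : ∀ i, 1 ≤ p i) :
    ∃ φ : PresentedGroup (sfsRels g n b e p q) →*
        Multiplicative (Fin (2 * g + b) → ℤ),
      Function.Surjective φ := by
  classical
  obtain ⟨b', rfl⟩ : ∃ b', b = b' + 1 := ⟨b - 1, by omega⟩
  set b := b' + 1 with hbdef
  obtain ⟨t, a, hta, hcl⟩ := sfs_exists_t_a n p q hp
  haveI : NeZero b := ⟨by omega⟩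
  set j0 : Fin (2 * g + b) := ⟨2 * g, by omega⟩ with hj0
  set dIdx : Fin b → Fin (2 * g + b) :=
    (fun k => ⟨2 * g + k.val, by have := k.isLt; omega⟩) with hdIdx
  set γ : ℤ := -((∑ i, a i) + e * t) with hγ
  set val : SFSGen g n b → (Fin (2 * g + b) → ℤ) := fun s =>
    match s with
    | .x i => Pi.single ⟨i.val, by have := i.isLt; omega⟩ 1
    | .y i => Pi.single ⟨g + i.val, by have := i.isLt; omega⟩ 1
    | .c i => Pi.single j0 (a i)
    | .d k => Pi.single (dIdx k) 1 - Pi.single (dIdx (finRotate b k)) 1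
        + (if k = (0 : Fin b) then Pi.single j0 γ else 0)
    | .h => Pi.single j0 t
    with hval
  set f : SFSGen g n b → Multiplicative (Fin (2 * g + b) → ℤ) :=
    (fun s => Multiplicative.ofAdd (val s)) with hf
  -- sums of the values of the `c`'s and the `d`'s
  have hcsum : ∑ i, (Pi.single j0 (a i) : Fin (2*g+b) → ℤ) = Pi.single j0 (∑ i, a i) := by
    funext j
    by_cases hj : j = j0 <;> simp [Pi.single_apply, hj]
  have hdsum : ∑ k, val (SFSGen.d k) = Pi.single j0 γ := by
    have hvd : ∀ k : Fin b, val (SFSGen.d k) = Pi.single (dIdx k) (1:ℤ)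
        - Pi.single (dIdx (finRotate b k)) 1
        + (if k = (0 : Fin b) then Pi.single j0 γ else 0) := fun k => rfl
    simp only [hvd]
    rw [Finset.sum_add_distrib, Finset.sum_sub_distrib,
      Equiv.sum_comp (finRotate b) (fun k => (Pi.single (dIdx k) (1:ℤ) : Fin (2*g+b) → ℤ)), sub_self, zero_add]
    simp
  have hrel : ∀ r ∈ sfsRels g n b e p q, FreeGroup.lift f r = 1 := by
    rintro r ((⟨s, rfl⟩ | ⟨i, rfl⟩) | rfl)
    · rw [map_commutatorElement]
      exact commutatorElement_eq_one_iff_commute.mpr (Commute.all _ _)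
    · rw [_root_.map_mul, map_zpow, map_zpow, FreeGroup.lift_apply_of, FreeGroup.lift_apply_of, hf]
      show Multiplicative.ofAdd (val (SFSGen.c i)) ^ p i
          * Multiplicative.ofAdd (val SFSGen.h) ^ q i = 1
      rw [← ofAdd_zsmul, ← ofAdd_zsmul, ← ofAdd_add, ofAdd_eq_one]
      have hvc : val (SFSGen.c i) = (Pi.single j0 (a i) : Fin (2*g+b) → ℤ) := rfl
      have hvh : val SFSGen.h = (Pi.single j0 t : Fin (2*g+b) → ℤ) := rfl
      rw [hvc, hvh, ← Pi.single_smul, ← Pi.single_smul, ← Pi.single_add, smul_eq_mul,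
        smul_eq_mul, hta i, Pi.single_zero]
    · rw [_root_.map_mul, _root_.map_mul, _root_.map_mul, map_zpow, map_list_prod, map_list_prod, map_list_prod,
        List.map_ofFn, List.map_ofFn, List.map_ofFn, List.prod_ofFn, List.prod_ofFn,
        List.prod_ofFn]
      have h1 : ∀ i : Fin g, (FreeGroup.lift f ∘ fun i =>
          ⁅of (SFSGen.x i : SFSGen g n b), of (SFSGen.y i)⁆) i = 1 := by
        intro i
        simp only [Function.comp_apply, map_commutatorElement]
        exact commutatorElement_eq_one_iff_commute.mpr (Commute.all _ _)
      rw [Finset.prod_congr rfl (fun i _ => h1 i), Finset.prod_const_one, one_mul]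
      have h2 : ∀ i : Fin n, (FreeGroup.lift f ∘ fun i =>
          of (SFSGen.c i : SFSGen g n b)) i = Multiplicative.ofAdd (Pi.single j0 (a i)) := by
        intro i; simp only [Function.comp_apply, FreeGroup.lift_apply_of]; rfl
      have h3 : ∀ k : Fin b, (FreeGroup.lift f ∘ fun k =>
          of (SFSGen.d k : SFSGen g n b)) k = Multiplicative.ofAdd (val (SFSGen.d k)) := by
        intro k; simp only [Function.comp_apply, FreeGroup.lift_apply_of]; rfl
      rw [Finset.prod_congr rfl (fun i _ => h2 i), Finset.prod_congr rfl (fun k _ => h3 k),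
        FreeGroup.lift_apply_of]
      show (∏ i, Multiplicative.ofAdd (Pi.single j0 (a i)))
          * (∏ k, Multiplicative.ofAdd (val (SFSGen.d k)))
          * Multiplicative.ofAdd (val SFSGen.h) ^ e = 1
      rw [← ofAdd_sum, ← ofAdd_sum, ← ofAdd_zsmul, ← ofAdd_add, ← ofAdd_add, ofAdd_eq_one,
        hcsum, hdsum]
      have hvh : val SFSGen.h = (Pi.single j0 t : Fin (2*g+b) → ℤ) := rfl
      rw [hvh, ← Pi.single_smul, smul_eq_mul, ← Pi.single_add, ← Pi.single_add]
      have : (∑ i, a i) + γ + e * t = 0 := by rw [hγ]; ring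
      rw [this, Pi.single_zero]
  refine ⟨PresentedGroup.toGroup hrel, ?_⟩
  set φ := PresentedGroup.toGroup hrel with hφ
  rw [← MonoidHom.range_eq_top]
  -- the additive version of the range
  set R : AddSubgroup (Fin (2 * g + b) → ℤ) := Subgroup.toAddSubgroup' φ.range with hR
  have hmemR : ∀ v, v ∈ R ↔ Multiplicative.ofAdd v ∈ φ.range := fun v => Iff.rfl
  have hgen : ∀ s : SFSGen g n b, val s ∈ R := by
    intro s
    rw [hmemR]
    exact ⟨PresentedGroup.of s, PresentedGroup.toGroup.of hrel⟩
  -- all multiples of `Pi.single j0` lie in `R`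
  have hW : ∀ z : ℤ, Pi.single j0 z ∈ R := by
    have : AddSubgroup.closure ({t} ∪ Set.range a) ≤
        (AddSubgroup.comap (AddMonoidHom.single (fun _ : Fin (2*g+b) => ℤ) j0) R) := by
      rw [AddSubgroup.closure_le]
      rintro z (rfl | ⟨i, rfl⟩)
      · exact hgen SFSGen.h
      · exact hgen (SFSGen.c i)
    rw [hcl, top_le_iff] at this
    intro z
    have hz : z ∈ (⊤ : AddSubgroup ℤ) := trivial
    rw [← this] at hz
    exact hz
  -- all the standard basis vectors lie in `R`
  have hbasis : ∀ j : Fin (2 * g + b), Pi.single j (1 : ℤ) ∈ R := by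
    -- first, the `d`-block ones, by induction along the rotation
    have hvd : ∀ k : Fin b, val (SFSGen.d k) = Pi.single (dIdx k) (1:ℤ)
        - Pi.single (dIdx (finRotate b k)) 1
        + (if k = (0 : Fin b) then Pi.single j0 γ else 0) := fun k => rfl
    have hdblock : ∀ (N : ℕ) (k : Fin b), k.val = N → Pi.single (dIdx k) (1 : ℤ) ∈ R := by
      intro N
      induction N with
      | zero =>
        intro k hk
        have hk0 : k = 0 := by
          apply Fin.ext; simpa using hk
        have : dIdx k = j0 := by simp [hdIdx, hj0, Fin.ext_iff, hk0]
        rw [this]; exact hW 1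
      | succ N ih =>
        intro k hk
        have hNb : N < b := by have := k.isLt; omega
        set k' : Fin b := ⟨N, hNb⟩ with hk'
        have hrot : finRotate b k' = k := by
          have h2 : finRotate (b'+1) k' = k' + 1 := finRotate_succ_apply k'
          apply Fin.ext
          show ((finRotate (b'+1)) k' : ℕ) = ↑k
          rw [h2, Fin.val_add_one_of_lt]
          · simp only [hk']
            omega
          · rw [Fin.lt_iff_val_lt_val]
            simp only [Fin.val_last]
            have h3 := k.isLt
            have h4 : (k:ℕ) < b' + 1 := h3
            have h5 : ((⟨N, hNb⟩ : Fin b) : ℕ) = N := rfl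
            omega
        have hite : (if k' = (0 : Fin b) then (Pi.single j0 γ : Fin (2*g+b) → ℤ) else 0) ∈ R := by
          split
          · exact hW γ
          · exact R.zero_mem
        have hmem := R.add_mem (R.sub_mem (ih k' rfl) (hgen (SFSGen.d k'))) hite
        have heq : (Pi.single (dIdx k) (1:ℤ) : Fin (2*g+b) → ℤ)
            = Pi.single (dIdx k') 1 - val (SFSGen.d k')
              + (if k' = (0 : Fin b) then Pi.single j0 γ else 0) := by
          rw [hvd k', hrot]
          abel
        rw [heq]
        exact hmem
    intro j
    rcases lt_or_ge j.val g with hj | hj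
    · have : j = (⟨(⟨j.val, hj⟩ : Fin g).val, by omega⟩ : Fin (2*g+b)) := by
        simp [Fin.ext_iff]
      rw [this]
      exact hgen (SFSGen.x ⟨j.val, hj⟩)
    rcases lt_or_ge j.val (2*g) with hj2 | hj2
    · have : j = (⟨g + (⟨j.val - g, by omega⟩ : Fin g).val, by omega⟩ : Fin (2*g+b)) := by
        simp [Fin.ext_iff]; omega
      rw [this]
      exact hgen (SFSGen.y ⟨j.val - g, by omega⟩)
    · have : j = dIdx ⟨j.val - 2*g, by have := j.isLt; omega⟩ := by
        simp [hdIdx, Fin.ext_iff]; omega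
      rw [this]
      exact hdblock _ _ rfl
  -- conclude
  rw [eq_top_iff]
  intro w _
  have : Multiplicative.toAdd w ∈ R := by
    rw [← Finset.univ_sum_single (Multiplicative.toAdd w)]
    exact AddSubgroup.sum_mem R fun j _ => by
      have : Pi.single j (Multiplicative.toAdd w j) =
          (Multiplicative.toAdd w j) • (Pi.single j (1:ℤ) : Fin (2*g+b) → ℤ) := by
        rw [← Pi.single_smul, smul_eq_mul, mul_one]
      rw [this]
      exact AddSubgroup.zsmul_mem R (hbasis j) _
  exact this
end

section
/- Fix natural numbers a, n, b with a ≥ 1 and b ≥ 1, an integer e, and for each i = 1, …, n integers p_i ≥ 1 and q_i. Let G be the group with generators z_1, …, z_a, c_1, …, c_n, d_1, …, d_b, h and relators: z_j h z_j⁻¹ h = 1 for each j = 1, …, a (i.e. conjugation by each z_j inverts h); h commutes with each c_i and each d_k; c_i^{p_i} h^{q_i} = 1 for each i = 1, …, n; and z_1²⋯z_a² · c_1⋯c_n · d_1⋯d_b · h^e = 1. Then there exists a surjective group homomorphism from G onto the free abelian group ℤ^{a+b−1}. (This is the algebraic content of the lower bound lemma in the nonorientable case: the fundamental group of a Seifert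 fibered space over a nonorientable base surface Σ with a crosscaps and b ≥ 1 boundary components has abelianization with a free summand of rank a + b − 1 = |1 − χ(Σ)|.) -/
/-- Generators of the standard presentation of the fundamental group of a Seifert
fibered space over a nonorientable base with `a` crosscaps, `n` singular fibres
and `b` boundary components: `z₁, …, z_a, c₁, …, c_n, d₁, …, d_b, h`. -/
inductive SFSGenN (a n b : ℕ) : Type
  | z : Fin a → SFSGenN a n b
  | c : Fin n → SFSGenN a n b
  | d : Fin b → SFSGenN a n b
  | h : SFSGenN a n b

open FreeGroup
open scoped commutatorElement

/-- The relators: `z_j h z_j⁻¹ h = 1` for each `j` (conjugation by `z_j` inverts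
`h`); `h` commutes with each `cᵢ` and each `d_k`; `cᵢ^{pᵢ} h^{qᵢ} = 1`; and
`z₁²⋯z_a² · c₁⋯c_n · d₁⋯d_b · h^e = 1`. -/
def sfsRelsN (a n b : ℕ) (e : ℤ) (p q : Fin n → ℤ) :
    Set (FreeGroup (SFSGenN a n b)) :=
  (Set.range fun j : Fin a =>
      of (SFSGenN.z j : SFSGenN a n b) * of (SFSGenN.h : SFSGenN a n b) *
        (of (SFSGenN.z j : SFSGenN a n b))⁻¹ * of (SFSGenN.h : SFSGenN a n b)) ∪
  (Set.range fun i : Fin n =>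
      ⁅of (SFSGenN.h : SFSGenN a n b), of (SFSGenN.c i : SFSGenN a n b)⁆) ∪
  (Set.range fun k : Fin b =>
      ⁅of (SFSGenN.h : SFSGenN a n b), of (SFSGenN.d k : SFSGenN a n b)⁆) ∪
  (Set.range fun i : Fin n =>
      of (SFSGenN.c i : SFSGenN a n b) ^ p i * of (SFSGenN.h : SFSGenN a n b) ^ q i) ∪
  { (List.ofFn fun j : Fin a => of (SFSGenN.z j : SFSGenN a n b) ^ 2).prod *
    (List.ofFn fun i : Fin n => of (SFSGenN.c i : SFSGenN a n b)).prod *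
    (List.ofFn fun k : Fin b => of (SFSGenN.d k : SFSGenN a n b)).prod *
    of (SFSGenN.h : SFSGenN a n b) ^ e }

/-- partial-sum vectors for telescoping the d-generators -/
def sVecN (a b : ℕ) (m : ℕ) : Fin (a + b - 1) → ℤ :=
  fun i => if m < b then (if a ≤ (i : ℕ) ∧ (i : ℕ) < a + m then 1 else 0)
           else (if (i : ℕ) < a then -2 else 0)

def FmapN (a n b : ℕ) (hb : 1 ≤ b) : SFSGenN a n b → (Fin (a + b - 1) → ℤ)
  | .z j => Pi.single ⟨j.1, by have := j.2; omega⟩ 1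
  | .c _ => 0
  | .d k => sVecN a b (k.1 + 1) - sVecN a b k.1
  | .h => 0

lemma sVecN_zero (a b : ℕ) (hb : 1 ≤ b) : sVecN a b 0 = 0 := by
  funext i
  simp only [sVecN, Pi.zero_apply]
  split_ifs <;> omega

lemma FmapN_d_single (a n b : ℕ) (hb : 1 ≤ b) (k : Fin b) (hk : k.1 + 1 < b) :
    FmapN a n b hb (SFSGenN.d k) = Pi.single (⟨a + k.1, by omega⟩ : Fin (a + b - 1)) 1 := by
  funext i
  simp only [FmapN, sVecN, Pi.sub_apply, Pi.single_apply]
  have hik : i = (⟨a + k.1, by omega⟩ : Fin (a + b - 1)) ↔ (i : ℕ) = a + k.1 := by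
    rw [Fin.ext_iff]
  by_cases hc : (i : ℕ) = a + k.1
  · simp only [hik, hc, if_true, if_pos]
    split_ifs <;> omega
  · simp only [hik, hc, if_false]
    split_ifs <;> omega

lemma keySumN (a n b : ℕ) (hb : 1 ≤ b) :
    (∑ j : Fin a, (FmapN a n b hb (SFSGenN.z j) + FmapN a n b hb (SFSGenN.z j)))
      + (∑ k : Fin b, FmapN a n b hb (SFSGenN.d k)) = 0 := by
  have hd : (∑ k : Fin b, FmapN a n b hb (SFSGenN.d k)) = sVecN a b b := by
    show (∑ k : Fin b, (sVecN a b (k.1 + 1) - sVecN a b k.1)) = _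
    rw [Fin.sum_univ_eq_sum_range (fun m => sVecN a b (m + 1) - sVecN a b m),
      Finset.sum_range_sub, sVecN_zero a b hb, sub_zero]
  rw [hd]
  funext i
  have hz : (∑ j : Fin a, (FmapN a n b hb (SFSGenN.z j) + FmapN a n b hb (SFSGenN.z j))) i
      = ∑ j : Fin a, (if (i : ℕ) = j.1 then (2 : ℤ) else 0) := by
    rw [Finset.sum_apply]
    refine Finset.sum_congr rfl fun j _ => ?_
    simp only [FmapN, Pi.add_apply, Pi.single_apply, Fin.ext_iff]
    split_ifs <;> norm_num
  rw [Pi.add_apply, hz, Pi.zero_apply,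
    Fin.sum_univ_eq_sum_range (fun m => if (i : ℕ) = m then (2 : ℤ) else 0),
    Finset.sum_ite_eq (Finset.range a) (i : ℕ) (fun _ => (2 : ℤ))]
  simp only [Finset.mem_range, sVecN]
  have := i.2
  split_ifs <;> omega

/-- The fundamental group of a Seifert fibered space over a nonorientable base
with `a ≥ 1` crosscaps and `b ≥ 1` boundary components surjects onto the free
abelian group of rank `a + b - 1`. -/
theorem sfs_pi1_surjects_onto_free_abelian_nonorientable
    (a n b : ℕ) (ha : 1 ≤ a) (hb : 1 ≤ b) (e : ℤ) (p q : Fin n → ℤ)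
    (hp : ∀ i, 1 ≤ p i) :
    ∃ φ : PresentedGroup (sfsRelsN a n b e p q) →*
        Multiplicative (Fin (a + b - 1) → ℤ),
      Function.Surjective φ := by
  classical
  let f : SFSGenN a n b → Multiplicative (Fin (a + b - 1) → ℤ) :=
    fun g => Multiplicative.ofAdd (FmapN a n b hb g)
  have fh : f SFSGenN.h = 1 := by
    rfl
  have fc : ∀ i, f (SFSGenN.c i) = 1 := by
    intro i
    rfl
  have hrel : ∀ w ∈ sfsRelsN a n b e p q, FreeGroup.lift f w = 1 := by
    intro w hw
    simp only [sfsRelsN, Set.mem_union, Set.mem_range, Set.mem_singleton_iff] at hw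
    rcases hw with ((((⟨j, rfl⟩ | ⟨i, rfl⟩) | ⟨k, rfl⟩) | ⟨i, rfl⟩) | rfl)
    · simp only [_root_.map_mul, _root_.map_inv, FreeGroup.lift_apply_of, fh]
      group
    · rw [map_commutatorElement]
      exact commutatorElement_eq_one_iff_mul_comm.mpr (mul_comm _ _)
    · rw [map_commutatorElement]
      exact commutatorElement_eq_one_iff_mul_comm.mpr (mul_comm _ _)
    · simp only [_root_.map_mul, map_zpow, FreeGroup.lift_apply_of, fh, fc, one_zpow, one_mul]
    · simp only [_root_.map_mul, map_zpow, map_list_prod, List.map_ofFn, Function.comp_def,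
        map_pow, FreeGroup.lift_apply_of, fh, fc, one_zpow, mul_one, List.prod_ofFn,
        Finset.prod_const_one]
      show (∏ j : Fin a, Multiplicative.ofAdd (FmapN a n b hb (SFSGenN.z j)) ^ 2) *
          (∏ k : Fin b, Multiplicative.ofAdd (FmapN a n b hb (SFSGenN.d k))) = 1
      have h1 : ∀ j : Fin a, Multiplicative.ofAdd (FmapN a n b hb (SFSGenN.z j)) ^ 2
          = Multiplicative.ofAdd (FmapN a n b hb (SFSGenN.z j) + FmapN a n b hb (SFSGenN.z j)) := by
        intro j
        rw [pow_two, ← ofAdd_add]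
      simp only [h1, ← ofAdd_sum, ← ofAdd_add, keySumN a n b hb, ofAdd_zero]
  refine ⟨PresentedGroup.toGroup hrel, ?_⟩
  have hgen : ∀ i : Fin (a + b - 1), ∃ g, PresentedGroup.toGroup hrel g
      = Multiplicative.ofAdd (Pi.single i (1 : ℤ)) := by
    intro i
    by_cases hi : (i : ℕ) < a
    · refine ⟨PresentedGroup.of (SFSGenN.z ⟨i.1, hi⟩), ?_⟩
      rw [PresentedGroup.toGroup.of]
      rfl
    · have hib := i.2
      refine ⟨PresentedGroup.of (SFSGenN.d ⟨i.1 - a, by omega⟩), ?_⟩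
      rw [PresentedGroup.toGroup.of]
      show Multiplicative.ofAdd (FmapN a n b hb _) = _
      rw [FmapN_d_single a n b hb _ (by show i.1 - a + 1 < b; omega)]
      exact congrArg (fun t : Fin (a + b - 1) => Multiplicative.ofAdd (Pi.single t (1 : ℤ)))
        (Fin.ext (show a + ((i : ℕ) - a) = (i : ℕ) by omega))
  choose g hg using hgen
  intro y
  refine ⟨(List.ofFn fun i : Fin (a + b - 1) => (g i) ^ (Multiplicative.toAdd y i)).prod, ?_⟩
  rw [map_list_prod]
  simp only [List.map_ofFn, Function.comp_def, map_zpow, hg, List.prod_ofFn]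
  have h2 : ∀ i : Fin (a + b - 1),
      Multiplicative.ofAdd (Pi.single i (1 : ℤ)) ^ (Multiplicative.toAdd y i)
      = Multiplicative.ofAdd ((Pi.single i (Multiplicative.toAdd y i) : Fin (a + b - 1) → ℤ)) := by
    intro i
    rw [← ofAdd_zsmul, ← Pi.single_smul, smul_eq_mul, mul_one]
  simp only [h2, ← ofAdd_sum, Finset.univ_sum_single]
  rfl
end
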